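/- Let q ∈ {0,…,n−1} and let {π_α}_{α∈A} be a collection of real (n−q)-dimensional affine subspaces of ℝⁿ whose union covers ℝⁿ. Let u be a continuous real-valued function on an open set ω ⊆ ℝⁿ such that for each α ∈ A the restriction of u to π_α ∩ ω is locally convex (i.e., every point of π_α ∩ ω has a convex relatively open neighborhood in π_α ∩ ω on which u is convex). Then u is real q-convex on ω. -/

import Mathlib

open Metric Set Filter

noncomputable section

/-- An upper semicontinuous function `u : ω → [−∞,+∞)` (EReal-valued, never `⊤` on `ω`)
is *real q-convex* on `ω` if it satisfies the local maximum property with respect to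
affine linear functions on real `(q+1)`-dimensional affine subspaces. -/
def RealQConvexOn {E : Type*} [NormedAddCommGroup E] [NormedSpace ℝ E]
    (q : ℕ) (u : E → EReal) (ω : Set E) : Prop :=
  (∀ x ∈ ω, u x ≠ ⊤) ∧ UpperSemicontinuousOn u ω ∧
    ∀ P : AffineSubspace ℝ E, Module.finrank ℝ P.direction = q + 1 →
      ∀ (c : E) (r : ℝ), 0 < r → closure (Metric.ball c r) ⊆ ω →
        ∀ l : E →ᵃ[ℝ] ℝ,
          (∀ x ∈ Metric.sphere c r ∩ (P : Set E), u x ≤ (l x : EReal)) →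
          ∀ x ∈ Metric.closedBall c r ∩ (P : Set E), u x ≤ (l x : EReal)

/-- If `{π_α}` is a family of real `(n-q)`-dimensional affine subspaces covering `ℝⁿ` and
`u` is continuous on `ω` and locally convex on each slice `π_α ∩ ω`, then `u` is real
q-convex on `ω`. -/
theorem realQConvexOn_of_locallyConvex_on_foliation {n q : ℕ} (hq : q < n)
    {A : Type*} (π : A → AffineSubspace ℝ (EuclideanSpace ℝ (Fin n)))
    (hdim : ∀ α, Module.finrank ℝ (π α).direction = n - q)
    (hcover : (⋃ α, (π α : Set (EuclideanSpace ℝ (Fin n)))) = Set.univ)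
    (ω : Set (EuclideanSpace ℝ (Fin n))) (hω : IsOpen ω)
    (u : EuclideanSpace ℝ (Fin n) → ℝ) (hu : ContinuousOn u ω)
    (hloc : ∀ α, ∀ x ∈ (π α : Set (EuclideanSpace ℝ (Fin n))) ∩ ω,
      ∃ U, IsOpen U ∧ x ∈ U ∧
        Convex ℝ (U ∩ (π α : Set (EuclideanSpace ℝ (Fin n))) ∩ ω) ∧
        ConvexOn ℝ (U ∩ (π α : Set (EuclideanSpace ℝ (Fin n))) ∩ ω) u) :
    RealQConvexOn q (fun x => (u x : EReal)) ω := by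
  refine ⟨fun x _ => EReal.coe_ne_top _, ?_, ?_⟩
  · exact continuous_coe_real_ereal.comp_upperSemicontinuousOn
      hu.upperSemicontinuousOn (fun a b hab => EReal.coe_le_coe_iff.mpr hab)
  intro P hP c r hr hsub l hl x hx
  simp only [EReal.coe_le_coe_iff]
  have hl' : ∀ z ∈ sphere c r ∩ (P : Set (EuclideanSpace ℝ (Fin n))), u z ≤ l z :=
    fun z hz => EReal.coe_le_coe_iff.mp (hl z hz)
  have hba : closedBall c r ⊆ ω := by
    rw [← closure_ball c hr.ne']; exact hsub
  set C : Set (EuclideanSpace ℝ (Fin n)) := closedBall c r ∩ (P : Set _) with hCdef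
  have hCsub : C ⊆ ω := fun z hz => hba hz.1
  have hPclosed : IsClosed (P : Set (EuclideanSpace ℝ (Fin n))) :=
    AffineSubspace.closed_of_finiteDimensional P
  have hCclosed : IsClosed C := isClosed_closedBall.inter hPclosed
  have hCc : IsCompact C := (isCompact_closedBall c r).inter_right hPclosed
  have hCne : C.Nonempty := ⟨x, hx⟩
  have hlc : Continuous l := l.continuous_of_finiteDimensional
  have hgc : ContinuousOn (fun z => u z - l z) C := (hu.mono hCsub).sub hlc.continuousOn
  obtain ⟨y₀, hy₀C, hy₀max⟩ := hCc.exists_isMaxOn hCne hgc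
  set K : Set (EuclideanSpace ℝ (Fin n)) :=
    C ∩ (fun z => u z - l z) ⁻¹' {u y₀ - l y₀} with hKdef
  have hKclosed : IsClosed K :=
    hgc.preimage_isClosed_of_isClosed hCclosed isClosed_singleton
  have hKc : IsCompact K := hCc.of_isClosed_subset hKclosed inter_subset_left
  have hKne : K.Nonempty := ⟨y₀, hy₀C, rfl⟩
  obtain ⟨y, hyK, hymax⟩ := hKc.exists_isMaxOn hKne
    ((continuous_id.dist continuous_const : Continuous fun z => dist z c).continuousOn)
  have hyC : y ∈ C := hyK.1
  have hyM : u y - l y = u y₀ - l y₀ := hyK.2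
  by_cases hys : dist y c = r
  · have h0 : u y - l y ≤ 0 := sub_nonpos.mpr (hl' y ⟨mem_sphere.mpr hys, hyC.2⟩)
    have hxle : u x - l x ≤ u y₀ - l y₀ := hy₀max hx
    linarith
  · exfalso
    have hylt : dist y c < r := lt_of_le_of_ne (mem_closedBall.mp hyC.1) hys
    have hyball : y ∈ ball c r := mem_ball.mpr hylt
    have hyω : y ∈ ω := hba hyC.1
    obtain ⟨α, hyα⟩ : ∃ α, y ∈ (π α : Set (EuclideanSpace ℝ (Fin n))) := by
      have : y ∈ ⋃ α, (π α : Set (EuclideanSpace ℝ (Fin n))) := hcover ▸ mem_univ y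
      simpa using this
    obtain ⟨U, hUopen, hyU, -, hconv⟩ := hloc α y ⟨hyα, hyω⟩
    obtain ⟨v, hv, hv0⟩ : ∃ v ∈ P.direction ⊓ (π α).direction, v ≠ 0 := by
      have hfin : Module.finrank ℝ (EuclideanSpace ℝ (Fin n)) = n := finrank_euclideanSpace_fin
      have h := Submodule.finrank_sup_add_finrank_inf_eq P.direction (π α).direction
      have hle : Module.finrank ℝ ↥(P.direction ⊔ (π α).direction) ≤ n := by
        have := Submodule.finrank_le (P.direction ⊔ (π α).direction)
        omega
      have hda := hdim α
      have hbot : (P.direction ⊓ (π α).direction) ≠ ⊥ := by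
        intro hb
        rw [hb, finrank_bot] at h
        omega
      exact Submodule.exists_mem_ne_zero_of_ne_bot hbot
    obtain ⟨ε, hε, hεsub⟩ := Metric.isOpen_iff.mp (hUopen.inter isOpen_ball) y ⟨hyU, hyball⟩
    have hvpos : 0 < ‖v‖ := norm_pos_iff.mpr hv0
    set t : ℝ := ε / (2 * ‖v‖) with htdef
    have ht : 0 < t := by positivity
    have h5 : t * ‖v‖ = ε / 2 := by
      rw [htdef]; field_simp
    have htv : ‖t • v‖ < ε := by
      rw [norm_smul, Real.norm_eq_abs, abs_of_pos ht, h5]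
      linarith
    have htv0 : t • v ≠ 0 := smul_ne_zero ht.ne' hv0
    set a := y + t • v with hadef
    set b := y - t • v with hbdef
    have havadd : a = (t • v) +ᵥ y := by rw [hadef, vadd_eq_add, add_comm]
    have hbvadd : b = (-(t • v)) +ᵥ y := by rw [hbdef, vadd_eq_add, neg_add_eq_sub]
    have haB : a ∈ ball y ε := by
      rw [mem_ball, dist_eq_norm, hadef]
      simpa using htv
    have hbB : b ∈ ball y ε := by
      rw [mem_ball, dist_eq_norm, hbdef]
      simpa using htv
    have haUb : a ∈ U ∩ ball c r := hεsub haB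
    have hbUb : b ∈ U ∩ ball c r := hεsub hbB
    have haP : a ∈ P := by
      rw [havadd]
      exact AffineSubspace.vadd_mem_of_mem_direction (P.direction.smul_mem t hv.1) hyC.2
    have hbP : b ∈ P := by
      rw [hbvadd]
      exact AffineSubspace.vadd_mem_of_mem_direction
        (P.direction.neg_mem (P.direction.smul_mem t hv.1)) hyC.2
    have haπ : a ∈ (π α : Set (EuclideanSpace ℝ (Fin n))) := by
      rw [havadd]
      exact AffineSubspace.vadd_mem_of_mem_direction ((π α).direction.smul_mem t hv.2) hyα
    have hbπ : b ∈ (π α : Set (EuclideanSpace ℝ (Fin n))) := by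
      rw [hbvadd]
      exact AffineSubspace.vadd_mem_of_mem_direction
        ((π α).direction.neg_mem ((π α).direction.smul_mem t hv.2)) hyα
    have haC : a ∈ C := ⟨ball_subset_closedBall haUb.2, haP⟩
    have hbC : b ∈ C := ⟨ball_subset_closedBall hbUb.2, hbP⟩
    have haS : a ∈ U ∩ (π α : Set (EuclideanSpace ℝ (Fin n))) ∩ ω :=
      ⟨⟨haUb.1, haπ⟩, hba haC.1⟩
    have hbS : b ∈ U ∩ (π α : Set (EuclideanSpace ℝ (Fin n))) ∩ ω :=
      ⟨⟨hbUb.1, hbπ⟩, hba hbC.1⟩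
    have hmid : (1/2 : ℝ) • a + (1/2 : ℝ) • b = y := by
      rw [hadef, hbdef]; module
    have hcu : u y ≤ (1/2 : ℝ) * u a + (1/2 : ℝ) * u b := by
      have := hconv.2 haS hbS (by norm_num : (0:ℝ) ≤ 1/2) (by norm_num : (0:ℝ) ≤ 1/2)
        (by norm_num : (1/2 : ℝ) + 1/2 = 1)
      rw [hmid] at this
      simpa [smul_eq_mul] using this
    have hla : l a = l.linear (t • v) + l y := by
      rw [havadd, AffineMap.map_vadd, vadd_eq_add]
    have hlb : l b = -l.linear (t • v) + l y := by
      rw [hbvadd, AffineMap.map_vadd, map_neg, vadd_eq_add]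
    have hlsum : l a + l b = 2 * l y := by rw [hla, hlb]; ring
    have hga : u a - l a ≤ u y₀ - l y₀ := hy₀max haC
    have hgb : u b - l b ≤ u y₀ - l y₀ := hy₀max hbC
    have hgaM : u a - l a = u y₀ - l y₀ := by linarith
    have hgbM : u b - l b = u y₀ - l y₀ := by linarith
    have haK : a ∈ K := ⟨haC, hgaM⟩
    have hbK : b ∈ K := ⟨hbC, hgbM⟩
    have hda : dist a c ≤ dist y c := hymax haK
    have hdb : dist b c ≤ dist y c := hymax hbK
    have hpar := parallelogram_law_with_norm ℝ (y - c) (t • v)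
    have hea : a - c = (y - c) + t • v := by rw [hadef]; abel
    have heb : b - c = (y - c) - t • v := by rw [hbdef]; abel
    have htvpos : 0 < ‖t • v‖ := norm_pos_iff.mpr htv0
    have h1 : ‖(y - c) + t • v‖ ≤ ‖y - c‖ := by
      rw [← hea, ← dist_eq_norm, ← dist_eq_norm]
      exact hda
    have h2 : ‖(y - c) - t • v‖ ≤ ‖y - c‖ := by
      rw [← heb, ← dist_eq_norm, ← dist_eq_norm]
      exact hdb
    have q1 := mul_self_le_mul_self (norm_nonneg ((y - c) + t • v)) h1
    have q2 := mul_self_le_mul_self (norm_nonneg ((y - c) - t • v)) h2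
    have q3 := mul_pos htvpos htvpos
    linarith
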